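/- Let n ≥ 1 and let O be an n×n complex matrix which is diagonalizable with real eigenvalues, i.e. O = U · D · U⁻¹ for some invertible complex matrix U and some diagonal matrix D with real diagonal entries. Then there exists an n×n Hermitian positive-definite complex matrix η such that η · O = Oᴴ · η. -/

import Mathlib

open scoped ComplexOrder Matrix

theorem stmt_0 (n : ℕ) (hn : 1 ≤ n)
    (O U : Matrix (Fin n) (Fin n) ℂ) (d : Fin n → ℝ)
    (hU : IsUnit U)
    (hO : O = U * Matrix.diagonal (fun i => (d i : ℂ)) * U⁻¹) :
    ∃ η : Matrix (Fin n) (Fin n) ℂ, η.PosDef ∧ η * O = Oᴴ * η := by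
  have hUinv : IsUnit U⁻¹ := Matrix.isUnit_nonsing_inv_iff.2 hU
  refine ⟨(U⁻¹)ᴴ * U⁻¹, ?_, ?_⟩
  · refine Matrix.PosDef.of_dotProduct_mulVec_pos (Matrix.posSemidef_conjTranspose_mul_self _).isHermitian fun x hx => ?_
    have hx' : U⁻¹ *ᵥ x ≠ 0 :=
      (Matrix.mulVec_injective_iff_isUnit.mpr hUinv).ne_iff' (by simp) |>.2 hx
    have := (Matrix.posSemidef_conjTranspose_mul_self (U⁻¹)).dotProduct_mulVec_nonneg x
    rcases lt_or_eq_of_le this with h | h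
    · exact h
    · exfalso
      apply hx'
      have h0 : dotProduct (star x) (((U⁻¹)ᴴ * U⁻¹) *ᵥ x) = 0 := h.symm
      rw [(Matrix.posSemidef_conjTranspose_mul_self (U⁻¹)).dotProduct_mulVec_zero_iff] at h0
      have hinj : Function.Injective ((U⁻¹)ᴴ).mulVec :=
        Matrix.mulVec_injective_iff_isUnit.mpr ((Matrix.isUnit_conjTranspose _).2 hUinv)
      apply hinj
      rw [← Matrix.mulVec_mulVec] at h0
      simpa using h0
  · have hD : (Matrix.diagonal (fun i => (d i : ℂ)))ᴴ = Matrix.diagonal (fun i => (d i : ℂ)) := by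
      simp [Matrix.diagonal_conjTranspose, Function.comp]
    have hUU : U⁻¹ * U = 1 := Matrix.nonsing_inv_mul _ (Matrix.isUnit_iff_isUnit_det _ |>.1 hU)
    have hUUc : Uᴴ * (U⁻¹)ᴴ = 1 := by
      rw [← Matrix.conjTranspose_mul, hUU, Matrix.conjTranspose_one]
    subst hO
    simp only [Matrix.conjTranspose_mul, hD, Matrix.mul_assoc]
    rw [← Matrix.mul_assoc U⁻¹ U, hUU, Matrix.one_mul]
    rw [← Matrix.mul_assoc Uᴴ (U⁻¹)ᴴ, hUUc, Matrix.one_mul]
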